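/- Let 𝒜 and 𝒟 be categories with pullbacks and F : 𝒜 → 𝒟 a fully faithful functor preserving pullbacks. Let f : A → B be a morphism in 𝒜 such that F(f) is an effective descent morphism in 𝒟. Then the following are equivalent: (i) f is an effective descent morphism in 𝒜; (ii) for every morphism g : E → F(B) in 𝒟, if the pullback of g along F(f) is isomorphic to F(C) for some object C of 𝒜, then E is isomorphic to F(D) for some object D of 𝒜. -/

import Mathlib

open CategoryTheory Limits

universe u
universe u₁ v₁ u₂ v₂

attribute [local instance] CategoryTheory.ConcreteCategory.instFunLike

namespace Desc

/-! ### Order-theoretic notions for preorders ("ordered sets") -/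

/-- `x ≅ y`: equivalence in a preorder. -/
def EquivLE {X : Type u} [Preorder X] (x y : X) : Prop := x ≤ y ∧ y ≤ x

/-- `m` is a binary meet (greatest lower bound) of `y` and `z`. -/
def IsMeet {X : Type u} [Preorder X] (y z m : X) : Prop :=
  m ≤ y ∧ m ≤ z ∧ ∀ u, u ≤ y → u ≤ z → u ≤ m

/-- `j` is a join (least upper bound) of the subset `S` computed in the down-set `↓x`. -/
def IsLocalJoin {X : Type u} [Preorder X] (x : X) (S : Set X) (j : X) : Prop :=
  j ≤ x ∧ (∀ s ∈ S, s ≤ j) ∧ ∀ u, u ≤ x → (∀ s ∈ S, s ≤ u) → j ≤ u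

/-- `X` is locally complete: every subset of a down-set `↓x` has a join in `↓x`. -/
def LocallyComplete (X : Type u) [Preorder X] : Prop :=
  ∀ x : X, ∀ S : Set X, (∀ s ∈ S, s ≤ x) → ∃ j, IsLocalJoin x S j

/-- `X` is complete: every subset has a join (least upper bound). -/
def CompleteOrd (X : Type u) [Preorder X] : Prop :=
  ∀ S : Set X, ∃ j, IsLUB S j

/-- `X` locally has binary meets: each down-set `↓x` has binary meets
(these are automatically meets in `X` of the pair). -/
def LocallyBinaryMeets (X : Type u) [Preorder X] : Prop :=
  ∀ x y z : X, y ≤ x → z ≤ x → ∃ m, IsMeet y z m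

/-- `X` is locally cartesian closed: each down-set `↓x` has binary meets and
exponentials `z^y` satisfying `w ∧ y ≤ z ↔ w ≤ z^y`. -/
def LocallyCartesianClosed (X : Type u) [Preorder X] : Prop :=
  LocallyBinaryMeets X ∧
    ∀ x y z : X, y ≤ x → z ≤ x →
      ∃ e, e ≤ x ∧ ∀ w, w ≤ x → ((∃ m, IsMeet w y m ∧ m ≤ z) ↔ w ≤ e)

theorem LocallyComplete.meets {X : Type u} [Preorder X] (h : LocallyComplete X) :
    LocallyBinaryMeets X := by
  intro x y z hy hz
  obtain ⟨j, hj⟩ := h x {u | u ≤ y ∧ u ≤ z} (fun s hs => hs.1.trans hy)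
  exact ⟨j, hj.2.2 y hy (fun s hs => hs.1), hj.2.2 z hz (fun s hs => hs.2),
    fun u h1 h2 => hj.2.1 u ⟨h1, h2⟩⟩

theorem CompleteOrd.meets {X : Type u} [Preorder X] (h : CompleteOrd X) :
    LocallyBinaryMeets X := by
  intro _ y z _ _
  obtain ⟨j, hj⟩ := h {u | u ≤ y ∧ u ≤ z}
  exact ⟨j, hj.2 (fun u hu => hu.1), hj.2 (fun u hu => hu.2),
    fun u h1 h2 => hj.1 ⟨h1, h2⟩⟩

/-! ### Descent-theoretic notions -/

/-- A morphism `f : A ⟶ B` in a category with pullbacks is an *effective descent morphism*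
if the comparison functor from `𝒜/B` to the Eilenberg–Moore category of the monad induced on
`𝒜/A` by the adjunction `f_! ⊣ f*` is an equivalence, i.e. `f*` is monadic. -/
def IsEffectiveDescentMorphism {C : Type*} [Category C] [HasPullbacks C]
    {A B : C} (f : A ⟶ B) : Prop :=
  (Monad.comparison (Over.mapPullbackAdj f)).IsEquivalence

/-- A morphism `f : A ⟶ B` in a category with pullbacks is a *descent morphism*
if the comparison functor from `𝒜/B` to the Eilenberg–Moore category of the monad induced on
`𝒜/A` by the adjunction `f_! ⊣ f*` is fully faithful. -/
def IsDescentMorphism {C : Type*} [Category C] [HasPullbacks C]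
    {A B : C} (f : A ⟶ B) : Prop :=
  (Monad.comparison (Over.mapPullbackAdj f)).Full ∧
    (Monad.comparison (Over.mapPullbackAdj f)).Faithful

/-- A morphism `f : A ⟶ B` is a (pullback-)stable regular epimorphism if every pullback of it
(along any `g : Z ⟶ B`) is a regular epimorphism. -/
def IsStableRegularEpi {C : Type*} [Category C] [HasPullbacks C]
    {A B : C} (f : A ⟶ B) : Prop :=
  ∀ ⦃Z : C⦄ (g : Z ⟶ B), Nonempty (RegularEpi (pullback.snd f g))



section PreordPullbacks

instance : HasPullbacks Preord.{u} := by
  have key : ∀ {A B C : Preord.{u}} (f : A ⟶ C) (g : B ⟶ C), HasLimit (cospan f g) := by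
    intro A B C f g
    let P : Preord.{u} := Preord.of {p : A × B // f p.1 = g p.2}
    let fst : P ⟶ A := Preord.ofHom ⟨fun p => p.1.1, fun _ _ h => h.1⟩
    let snd : P ⟶ B := Preord.ofHom ⟨fun p => p.1.2, fun _ _ h => h.2⟩
    have eq : fst ≫ f = snd ≫ g := Preord.ext (fun p => p.2)
    refine HasLimit.mk ⟨_, PullbackCone.IsLimit.mk eq
      (fun s => Preord.ofHom ⟨fun d => ⟨(s.fst d, s.snd d),
        congrArg (fun (h : s.pt ⟶ C) => h d) s.condition⟩,
        fun _ _ h => ⟨s.fst.hom.monotone h, s.snd.hom.monotone h⟩⟩)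
      (fun s => rfl) (fun s => rfl) (fun s m h1 h2 => ?_)⟩
    apply Preord.ext
    intro d
    apply Subtype.ext
    exact Prod.ext (congrArg (fun (h : s.pt ⟶ A) => h d) h1)
      (congrArg (fun (h : s.pt ⟶ B) => h d) h2)
  exact @hasPullbacks_of_hasLimit_cospan _ _ (fun {A B C f g} => key f g)

instance : HasPullbacks PartOrd.{u} := by
  have key : ∀ {A B C : PartOrd.{u}} (f : A ⟶ C) (g : B ⟶ C), HasLimit (cospan f g) := by
    intro A B C f g
    let P : PartOrd.{u} := PartOrd.of {p : A × B // f p.1 = g p.2}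
    let fst : P ⟶ A := PartOrd.ofHom ⟨fun p => p.1.1, fun _ _ h => h.1⟩
    let snd : P ⟶ B := PartOrd.ofHom ⟨fun p => p.1.2, fun _ _ h => h.2⟩
    have eq : fst ≫ f = snd ≫ g := PartOrd.ext (fun p => p.2)
    refine HasLimit.mk ⟨_, PullbackCone.IsLimit.mk eq
      (fun s => PartOrd.ofHom ⟨fun d => ⟨(s.fst d, s.snd d),
        congrArg (fun (h : s.pt ⟶ C) => h d) s.condition⟩,
        fun _ _ h => ⟨s.fst.hom.monotone h, s.snd.hom.monotone h⟩⟩)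
      (fun s => rfl) (fun s => rfl) (fun s m h1 h2 => ?_)⟩
    apply PartOrd.ext
    intro d
    apply Subtype.ext
    exact Prod.ext (congrArg (fun (h : s.pt ⟶ A) => h d) h1)
      (congrArg (fun (h : s.pt ⟶ B) => h d) h2)
  exact @hasPullbacks_of_hasLimit_cospan _ _ (fun {A B C f g} => key f g)

end PreordPullbacks



variable (X : Type u) [Preorder X]

/-! ### The lax comma category `Ord // X` -/

/-- Objects of the lax comma category `Ord // X`: an ordered set `A` together with a
monotone map `α : A → X`. -/
structure OrdComma : Type (u + 1) where
  carrier : Type u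
  [str : Preorder carrier]
  map : carrier → X
  mono : Monotone map

attribute [instance] OrdComma.str

variable {X}

/-- Morphisms in `Ord // X`: monotone maps `f` with `α(a) ≤ β(f(a))`. -/
@[ext]
structure OrdCommaHom (A B : OrdComma X) : Type u where
  toFun : A.carrier → B.carrier
  mono : Monotone toFun
  le : ∀ a, A.map a ≤ B.map (toFun a)

instance : Category (OrdComma X) where
  Hom := OrdCommaHom
  id A := ⟨id, monotone_id, fun _ => le_refl _⟩
  comp f g := ⟨OrdCommaHom.toFun g ∘ OrdCommaHom.toFun f,
    (OrdCommaHom.mono g).comp (OrdCommaHom.mono f),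
    fun a => (OrdCommaHom.le f a).trans (OrdCommaHom.le g _)⟩
  id_comp _ := rfl
  comp_id _ := rfl
  assoc _ _ _ := rfl

/-- The underlying function of a morphism in `Ord // X`. -/
def OrdComma.app {A B : OrdComma X} (f : A ⟶ B) : A.carrier → B.carrier :=
  OrdCommaHom.toFun f

/-! ### The category `Fam(X)` of set-indexed families of elements of `X` -/

variable (X) in
/-- Objects of `Fam(X)`: families `(α_j)_{j ∈ J}` of elements of `X`. -/
structure FamCat : Type (u + 1) where
  idx : Type u
  val : idx → X

/-- Morphisms in `Fam(X)`: functions `f : J → K` with `α_j ≤ β_{f(j)}`. -/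
@[ext]
structure FamHom (A B : FamCat X) : Type u where
  toFun : A.idx → B.idx
  le : ∀ j, A.val j ≤ B.val (toFun j)

instance : Category (FamCat X) where
  Hom := FamHom
  id A := ⟨id, fun _ => le_refl _⟩
  comp f g := ⟨FamHom.toFun g ∘ FamHom.toFun f,
    fun a => (FamHom.le f a).trans (FamHom.le g _)⟩
  id_comp _ := rfl
  comp_id _ := rfl
  assoc _ _ _ := rfl

/-- The underlying function of a morphism in `Fam(X)`. -/
def FamCat.app {A B : FamCat X} (f : A ⟶ B) : A.idx → B.idx :=
  FamHom.toFun f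

/-! ### The category `Ord ×_Set Fam(X)` -/

variable (X) in
/-- Objects of `Ord ×_Set Fam(X)`: an ordered set `C` with an arbitrary function
`χ : C → X`. -/
structure OrdFam : Type (u + 1) where
  carrier : Type u
  [str : Preorder carrier]
  map : carrier → X

attribute [instance] OrdFam.str

/-- Morphisms in `Ord ×_Set Fam(X)`: monotone maps `f` with `χ(c) ≤ ψ(f(c))`. -/
@[ext]
structure OrdFamHom (A B : OrdFam X) : Type u where
  toFun : A.carrier → B.carrier
  mono : Monotone toFun
  le : ∀ a, A.map a ≤ B.map (toFun a)

instance : Category (OrdFam X) where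
  Hom := OrdFamHom
  id A := ⟨id, monotone_id, fun _ => le_refl _⟩
  comp f g := ⟨OrdFamHom.toFun g ∘ OrdFamHom.toFun f,
    (OrdFamHom.mono g).comp (OrdFamHom.mono f),
    fun a => (OrdFamHom.le f a).trans (OrdFamHom.le g _)⟩
  id_comp _ := rfl
  comp_id _ := rfl
  assoc _ _ _ := rfl

/-! ### Functors between these categories -/

variable (X) in
/-- The forgetful functor `Ord // X ⥤ Ord`. -/
def ordCommaForget : OrdComma X ⥤ Preord.{u} where
  obj A := Preord.of A.carrier
  map f := Preord.ofHom ⟨OrdCommaHom.toFun f, OrdCommaHom.mono f⟩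
  map_id _ := rfl
  map_comp _ _ := rfl

variable (X) in
/-- The forgetful functor `Ord // X ⥤ Fam(X)`, `(A, α) ↦ (α(a))_{a ∈ A}`. -/
def ordCommaToFam : OrdComma X ⥤ FamCat X where
  obj A := ⟨A.carrier, A.map⟩
  map f := ⟨OrdCommaHom.toFun f, OrdCommaHom.le f⟩
  map_id _ := rfl
  map_comp _ _ := rfl

variable (X) in
/-- The projection `ρ₁ : Ord ×_Set Fam(X) ⥤ Ord`. -/
def rho₁ : OrdFam X ⥤ Preord.{u} where
  obj A := Preord.of A.carrier
  map f := Preord.ofHom ⟨OrdFamHom.toFun f, OrdFamHom.mono f⟩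
  map_id _ := rfl
  map_comp _ _ := rfl

variable (X) in
/-- The projection `ρ₂ : Ord ×_Set Fam(X) ⥤ Fam(X)`. -/
def rho₂ : OrdFam X ⥤ FamCat X where
  obj A := ⟨A.carrier, A.map⟩
  map f := ⟨OrdFamHom.toFun f, OrdFamHom.le f⟩
  map_id _ := rfl
  map_comp _ _ := rfl

/-! ### Restrictions `f_x : A_x → B_x` -/

/-- For `(A, α)` in `Ord // X` and `x ∈ X`, the ordered set `A_x = {a ∈ A : x ≤ α(a)}`. -/
def OrdComma.fiber (A : OrdComma X) (x : X) : Preord.{u} :=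
  Preord.of {a : A.carrier // x ≤ A.map a}

/-- The restriction `f_x : A_x → B_x` of a morphism `f : (A, α) ⟶ (B, β)` of `Ord // X`. -/
def OrdComma.fiberMap {A B : OrdComma X} (f : A ⟶ B) (x : X) :
    A.fiber x ⟶ B.fiber x :=
  Preord.ofHom ⟨fun a => ⟨OrdCommaHom.toFun f a.1, a.2.trans (OrdCommaHom.le f a.1)⟩,
    fun _ _ h => OrdCommaHom.mono f h⟩



variable {X : Type u} [Preorder X]

theorem OrdComma.hasPullbacks (hm : LocallyBinaryMeets X) :
    HasPullbacks (OrdComma X) := by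
  have key : ∀ {A B C : OrdComma X} (f : A ⟶ C) (g : B ⟶ C), HasLimit (cospan f g) := by
    intro A B C f g
    have hmeet : ∀ p : {p : A.carrier × B.carrier //
        OrdCommaHom.toFun f p.1 = OrdCommaHom.toFun g p.2},
        ∃ m, IsMeet (A.map p.1.1) (B.map p.1.2) m := fun p =>
      hm (C.map (OrdCommaHom.toFun f p.1.1)) _ _ (OrdCommaHom.le f p.1.1)
        (by rw [p.2]; exact OrdCommaHom.le g p.1.2)
    choose μ hμ using hmeet
    let P : OrdComma X :=
      { carrier := {p : A.carrier × B.carrier //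
          OrdCommaHom.toFun f p.1 = OrdCommaHom.toFun g p.2}
        map := μ
        mono := fun p q h => by
          have hpq : p.1 ≤ q.1 := h
          exact (hμ q).2.2 _ ((hμ p).1.trans (A.mono (Prod.le_def.mp hpq).1))
            ((hμ p).2.1.trans (B.mono (Prod.le_def.mp hpq).2)) }
    let pfst : P ⟶ A := ⟨fun p => p.1.1, fun _ _ h => h.1, fun p => (hμ p).1⟩
    let psnd : P ⟶ B := ⟨fun p => p.1.2, fun _ _ h => h.2, fun p => (hμ p).2.1⟩
    have eq : pfst ≫ f = psnd ≫ g := OrdCommaHom.ext (funext fun p => p.2)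
    refine HasLimit.mk ⟨_, PullbackCone.IsLimit.mk eq
      (fun s => ⟨fun d => ⟨(OrdCommaHom.toFun s.fst d, OrdCommaHom.toFun s.snd d),
          congrFun (congrArg OrdCommaHom.toFun s.condition) d⟩,
        fun _ _ h => ⟨OrdCommaHom.mono s.fst h, OrdCommaHom.mono s.snd h⟩,
        fun d => (hμ _).2.2 _ (OrdCommaHom.le s.fst d) (OrdCommaHom.le s.snd d)⟩)
      (fun s => rfl) (fun s => rfl) (fun s m h1 h2 => ?_)⟩
    apply OrdCommaHom.ext
    funext d
    exact Subtype.ext (Prod.ext (congrFun (congrArg OrdCommaHom.toFun h1) d)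
      (congrFun (congrArg OrdCommaHom.toFun h2) d))
  exact @hasPullbacks_of_hasLimit_cospan _ _ (fun {A B C f g} => key f g)

theorem FamCat.hasPullbacks (hm : LocallyBinaryMeets X) :
    HasPullbacks (FamCat X) := by
  have key : ∀ {A B C : FamCat X} (f : A ⟶ C) (g : B ⟶ C), HasLimit (cospan f g) := by
    intro A B C f g
    have hmeet : ∀ p : {p : A.idx × B.idx // FamHom.toFun f p.1 = FamHom.toFun g p.2},
        ∃ m, IsMeet (A.val p.1.1) (B.val p.1.2) m := fun p =>
      hm (C.val (FamHom.toFun f p.1.1)) _ _ (FamHom.le f p.1.1)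
        (by rw [p.2]; exact FamHom.le g p.1.2)
    choose μ hμ using hmeet
    let P : FamCat X :=
      { idx := {p : A.idx × B.idx // FamHom.toFun f p.1 = FamHom.toFun g p.2}
        val := μ }
    let pfst : P ⟶ A := ⟨fun p => p.1.1, fun p => (hμ p).1⟩
    let psnd : P ⟶ B := ⟨fun p => p.1.2, fun p => (hμ p).2.1⟩
    have eq : pfst ≫ f = psnd ≫ g := FamHom.ext (funext fun p => p.2)
    refine HasLimit.mk ⟨_, PullbackCone.IsLimit.mk eq
      (fun s => ⟨fun d => ⟨(FamHom.toFun s.fst d, FamHom.toFun s.snd d),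
          congrFun (congrArg FamHom.toFun s.condition) d⟩,
        fun d => (hμ _).2.2 _ (FamHom.le s.fst d) (FamHom.le s.snd d)⟩)
      (fun s => rfl) (fun s => rfl) (fun s m h1 h2 => ?_)⟩
    apply FamHom.ext
    funext d
    exact Subtype.ext (Prod.ext (congrFun (congrArg FamHom.toFun h1) d)
      (congrFun (congrArg FamHom.toFun h2) d))
  exact @hasPullbacks_of_hasLimit_cospan _ _ (fun {A B C f g} => key f g)

theorem OrdFam.hasPullbacks (hm : LocallyBinaryMeets X) :
    HasPullbacks (OrdFam X) := by
  have key : ∀ {A B C : OrdFam X} (f : A ⟶ C) (g : B ⟶ C), HasLimit (cospan f g) := by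
    intro A B C f g
    have hmeet : ∀ p : {p : A.carrier × B.carrier //
        OrdFamHom.toFun f p.1 = OrdFamHom.toFun g p.2},
        ∃ m, IsMeet (A.map p.1.1) (B.map p.1.2) m := fun p =>
      hm (C.map (OrdFamHom.toFun f p.1.1)) _ _ (OrdFamHom.le f p.1.1)
        (by rw [p.2]; exact OrdFamHom.le g p.1.2)
    choose μ hμ using hmeet
    let P : OrdFam X :=
      { carrier := {p : A.carrier × B.carrier //
          OrdFamHom.toFun f p.1 = OrdFamHom.toFun g p.2}
        map := μ }
    let pfst : P ⟶ A := ⟨fun p => p.1.1, fun _ _ h => h.1, fun p => (hμ p).1⟩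
    let psnd : P ⟶ B := ⟨fun p => p.1.2, fun _ _ h => h.2, fun p => (hμ p).2.1⟩
    have eq : pfst ≫ f = psnd ≫ g := OrdFamHom.ext (funext fun p => p.2)
    refine HasLimit.mk ⟨_, PullbackCone.IsLimit.mk eq
      (fun s => ⟨fun d => ⟨(OrdFamHom.toFun s.fst d, OrdFamHom.toFun s.snd d),
          congrFun (congrArg OrdFamHom.toFun s.condition) d⟩,
        fun _ _ h => ⟨OrdFamHom.mono s.fst h, OrdFamHom.mono s.snd h⟩,
        fun d => (hμ _).2.2 _ (OrdFamHom.le s.fst d) (OrdFamHom.le s.snd d)⟩)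
      (fun s => rfl) (fun s => rfl) (fun s m h1 h2 => ?_)⟩
    apply OrdFamHom.ext
    funext d
    exact Subtype.ext (Prod.ext (congrFun (congrArg OrdFamHom.toFun h1) d)
      (congrFun (congrArg OrdFamHom.toFun h2) d))
  exact @hasPullbacks_of_hasLimit_cospan _ _ (fun {A B C f g} => key f g)



variable (X : Type u) [Preorder X]

/-- The set of connected components of an ordered set `X`: the quotient of `X` by the
equivalence relation generated by `≤` (zigzags). -/
def ConnComp : Type u := Quot (fun a b : X => a ≤ b)

/-- The connected component of `X` corresponding to `i`, as an ordered set. -/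
def Component (i : ConnComp X) : Type u :=
  {x : X // Quot.mk (fun a b : X => a ≤ b) x = i}

instance (i : ConnComp X) : Preorder (Component X i) :=
  Subtype.preorder _

/-- The comparison functor `Ord // X ⥤ ∏_{i ∈ I} Ord // X_i`, where `(X_i)_{i ∈ I}` are the
connected components of `X`: it sends `(A, α)` to the family of (co)restrictions
`(A_i, α_i : A_i → X_i)` with `A_i = α⁻¹(X_i)`. -/
def componentFunctor : OrdComma X ⥤ (∀ i : ConnComp X, OrdComma (Component X i)) where
  obj A := fun i =>
    { carrier := {a : A.carrier // Quot.mk (fun a b : X => a ≤ b) (A.map a) = i}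
      map := fun a => ⟨A.map a.1, a.2⟩
      mono := fun _ _ h => A.mono h }
  map {A B} f := fun i =>
    { toFun := fun a => ⟨OrdCommaHom.toFun f a.1,
        (Quot.sound (OrdCommaHom.le f a.1)).symm.trans a.2⟩
      mono := fun _ _ h => OrdCommaHom.mono f h
      le := fun a => OrdCommaHom.le f a.1 }
  map_id A := by
    funext i
    apply OrdCommaHom.ext
    funext a
    rfl
  map_comp f g := by
    funext i
    apply OrdCommaHom.ext
    funext a
    rfl



/-! ### Auxiliary development for `statement0` -/

universe w₁ x₁ w₂ x₂

noncomputable section AuxDesc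

set_option linter.unusedSectionVars false

variable {𝒜 : Type w₁} [Category.{x₁} 𝒜] {𝒟 : Type w₂} [Category.{x₂} 𝒟]
  [HasPullbacks 𝒜] [HasPullbacks 𝒟]
  (F : 𝒜 ⥤ 𝒟) [F.Full] [F.Faithful] [PreservesLimitsOfShape WalkingCospan F]
  {A B : 𝒜} (f : A ⟶ B)


example (a : Over A) : 𝟙 ((Over.post F).obj a).left ≫ ((Over.post F).obj ((Over.map f).obj a)).hom = ((Over.post F).obj a).hom ≫ F.map f := by
  simp [Over.post]
example (x : Over B) : PreservesLimit (cospan x.hom f) F := inferInstance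
example (x : Over B) : IsIso (pullbackComparison F x.hom f) := inferInstance
/-- The commuting square of left adjoints. -/
def theta : (Over.post F : Over A ⥤ _) ⋙ Over.map (F.map f) ≅ Over.map f ⋙ Over.post F :=
  NatIso.ofComponents (fun a => Over.isoMk (Iso.refl _) (by simp [Over.post])) (by intros; ext; exact (Category.comp_id _).trans (Category.id_comp _).symm)


/-- The mate of `theta`. -/
def xi : (Over.pullback f ⋙ Over.post F : Over B ⥤ _) ⟶ Over.post F ⋙ Over.pullback (F.map f) :=
  mateEquiv (Over.mapPullbackAdj f) (Over.mapPullbackAdj (F.map f)) (theta F f).hom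

lemma xi_app_left (x : Over B) :
    ((xi F f).app x).left = pullbackComparison F x.hom f := by
  apply pullback.hom_ext
  · simp [xi, mateEquiv, theta, Over.mapPullbackAdj, Over.pullback, pullbackComparison]
    dsimp [Over.post]
    erw [pullback.lift_fst, pullback.lift_fst_assoc, Category.assoc, pullback.lift_fst_assoc,
      pullback.lift_fst]
    exact (Category.id_comp _).trans (Category.id_comp _)
  · simp [xi, mateEquiv, theta, Over.mapPullbackAdj, Over.pullback, pullbackComparison]
    dsimp [Over.post]
    erw [pullback.lift_snd, pullback.lift_snd, pullback.lift_snd, pullback.lift_snd]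

instance : IsIso (xi F f) := by
  have : ∀ x : Over B, IsIso ((xi F f).app x) := by
    intro x
    have h1 : IsIso ((xi F f).app x).left := by
      rw [xi_app_left]; exact (inferInstance : IsIso (pullbackComparison F x.hom f))
    have h2 : IsIso ((Over.forget _).map ((xi F f).app x)) := h1
    exact isIso_of_reflects_iso _ (Over.forget _)
  exact NatIso.isIso_of_isIso_app _

/-- The square of right adjoints, as an isomorphism. -/
def xiIso : (Over.pullback f ⋙ Over.post F : Over B ⥤ _) ≅ Over.post F ⋙ Over.pullback (F.map f) :=
  asIso (xi F f)

/-- The comparison of monads. -/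
def omega (a : Over A) :
    (Over.pullback (F.map f)).obj ((Over.map (F.map f)).obj ((Over.post F).obj a)) ≅
      (Over.post F).obj ((Over.pullback f).obj ((Over.map f).obj a)) :=
  (Over.pullback (F.map f)).mapIso ((theta F f).app a) ≪≫
    (xiIso F f).symm.app ((Over.map f).obj a)

lemma omega_unit (a : Over A) :
    (Over.post F).map ((Over.mapPullbackAdj f).unit.app a) =
      (Over.mapPullbackAdj (F.map f)).unit.app ((Over.post F).obj a) ≫ (omega F f a).hom := by
  have h := unit_mateEquiv (Over.mapPullbackAdj f) (Over.mapPullbackAdj (F.map f))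
    (theta F f).hom a
  rw [← cancel_mono ((xi F f).app ((Over.map f).obj a))]
  simp only [omega, xiIso, Iso.trans_hom, Functor.mapIso_hom, Iso.symm_hom, Iso.app_hom,
    asIso_inv, NatIso.isIso_inv_app, Category.assoc, IsIso.inv_hom_id, Category.comp_id]
  exact h

lemma omega_natural {a b : Over A} (u : a ⟶ b) :
    (Over.pullback (F.map f)).map ((Over.map (F.map f)).map ((Over.post F).map u)) ≫
        (omega F f b).hom =
      (omega F f a).hom ≫ (Over.post F).map ((Over.pullback f).map ((Over.map f).map u)) := by
  have h2 := (xi F f).naturality ((Over.map f).map u)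
  have h1 := (theta F f).hom.naturality u
  simp only [Functor.comp_map] at h2 h1
  rw [← cancel_mono ((xi F f).app ((Over.map f).obj b))]
  simp only [omega, xiIso, Iso.trans_hom, Functor.mapIso_hom, Iso.symm_hom, Iso.app_hom,
    asIso_inv, NatIso.isIso_inv_app, Category.assoc, IsIso.inv_hom_id, Category.comp_id]
  rw [h2]
  simp only [IsIso.inv_hom_id_assoc]
  rw [← (Over.pullback (F.map f)).map_comp, ← (Over.pullback (F.map f)).map_comp, h1]

lemma omega_mu (a : Over A) :
    (Over.pullback (F.map f)).map ((Over.mapPullbackAdj (F.map f)).counit.app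
        ((Over.map (F.map f)).obj ((Over.post F).obj a))) ≫ (omega F f a).hom =
      (Over.pullback (F.map f)).map ((Over.map (F.map f)).map (omega F f a).hom) ≫
        (omega F f ((Over.pullback f).obj ((Over.map f).obj a))).hom ≫
          (Over.post F).map ((Over.pullback f).map
            ((Over.mapPullbackAdj f).counit.app ((Over.map f).obj a))) := by
  have h1 := (xi F f).naturality ((Over.mapPullbackAdj f).counit.app ((Over.map f).obj a))
  simp only [Functor.comp_map, Functor.comp_obj, Functor.id_obj] at h1
  have h1' : inv ((xi F f).app ((Over.map f).obj ((Over.pullback f).obj ((Over.map f).obj a)))) ≫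
      (Over.post F).map ((Over.pullback f).map
        ((Over.mapPullbackAdj f).counit.app ((Over.map f).obj a))) =
      (Over.pullback (F.map f)).map ((Over.post F).map
        ((Over.mapPullbackAdj f).counit.app ((Over.map f).obj a))) ≫
        inv ((xi F f).app ((Over.map f).obj a)) := by
    rw [IsIso.inv_comp_eq, ← Category.assoc, ← h1, Category.assoc, IsIso.hom_inv_id,
      Category.comp_id]
  have h2 := mateEquiv_counit (Over.mapPullbackAdj f) (Over.mapPullbackAdj (F.map f))
    (theta F f).hom ((Over.map f).obj a)
  have h3 := (Over.mapPullbackAdj (F.map f)).counit.naturality ((theta F f).hom.app a)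
  simp only [Functor.comp_map, Functor.id_map, Functor.comp_obj, Functor.id_obj] at h2 h3
  have h2' : (Over.map (F.map f)).map ((xi F f).app ((Over.map f).obj a)) ≫
      (Over.mapPullbackAdj (F.map f)).counit.app ((Over.post F).obj ((Over.map f).obj a)) =
      (theta F f).hom.app ((Over.pullback f).obj ((Over.map f).obj a)) ≫
        (Over.post F).map ((Over.mapPullbackAdj f).counit.app ((Over.map f).obj a)) := h2
  simp only [omega, xiIso, Iso.trans_hom, Functor.mapIso_hom, Iso.symm_hom, Iso.app_hom,
    asIso_inv, NatIso.isIso_inv_app, Category.assoc]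
  rw [h1']
  rw [← cancel_mono ((xi F f).app ((Over.map f).obj a))]
  simp only [Category.assoc, IsIso.inv_hom_id, Category.comp_id]
  rw [← (Over.pullback (F.map f)).map_comp ((theta F f).hom.app _), ← h2',
    (Over.pullback (F.map f)).map_comp, ← Category.assoc,
    ← (Over.pullback (F.map f)).map_comp]
  rw [← (Over.pullback (F.map f)).map_comp, ← (Over.map (F.map f)).map_comp,
    Category.assoc, IsIso.inv_hom_id, Category.comp_id,
    ← (Over.pullback (F.map f)).map_comp, h3]

/-- The induced functor between Eilenberg–Moore categories. -/
@[simps]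
def Gfun : (Over.mapPullbackAdj f).toMonad.Algebra ⥤
    (Over.mapPullbackAdj (F.map f)).toMonad.Algebra where
  obj α :=
    { A := (Over.post F).obj α.A
      a := (omega F f α.A).hom ≫ (Over.post F).map α.a
      unit := by
        have hu := α.unit
        simp only [Adjunction.toMonad_η] at hu ⊢
        show (Over.mapPullbackAdj (F.map f)).unit.app ((Over.post F).obj α.A) ≫
          ((omega F f α.A).hom ≫ (Over.post F).map α.a) = 𝟙 ((Over.post F).obj α.A)
        rw [← Category.assoc, ← omega_unit]
        erw [← Functor.map_comp, hu]
        exact CategoryTheory.Functor.map_id _ _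
      assoc := by
        have ha := α.assoc
        have hn := omega_natural F f (a := (Over.pullback f).obj ((Over.map f).obj α.A))
          (b := α.A) α.a
        simp only [Adjunction.toMonad_coe, Adjunction.toMonad_μ, Functor.comp_map,
          Functor.whiskerRight_app, Functor.whiskerLeft_app, Functor.comp_obj] at ha ⊢
        show (Over.pullback (F.map f)).map ((Over.mapPullbackAdj (F.map f)).counit.app
            ((Over.map (F.map f)).obj ((Over.post F).obj α.A))) ≫
            ((omega F f α.A).hom ≫ (Over.post F).map α.a) =
          (Over.pullback (F.map f)).map ((Over.map (F.map f)).map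
            ((omega F f α.A).hom ≫ (Over.post F).map α.a)) ≫
            ((omega F f α.A).hom ≫ (Over.post F).map α.a)
        replace ha : (Over.pullback f).map ((Over.mapPullbackAdj f).counit.app
            ((Over.map f).obj α.A)) ≫ α.a = (Over.pullback f).map ((Over.map f).map α.a) ≫ α.a := ha
        rw [← Category.assoc, omega_mu, Category.assoc, Category.assoc]
        erw [← Functor.map_comp, ha, (Over.post F).map_comp]
        erw [(Over.map (F.map f)).map_comp (omega F f α.A).hom,
          (Over.pullback (F.map f)).map_comp ((Over.map (F.map f)).map (omega F f α.A).hom)]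
        simp only [Category.assoc]
        erw [reassoc_of% hn]
        rfl }
  map {α β} h :=
    { f := (Over.post F).map h.f
      h := by
        have hh := h.h
        have hn := omega_natural F f h.f
        simp only [Adjunction.toMonad_coe, Functor.comp_map] at hh ⊢
        show (Over.pullback (F.map f)).map ((Over.map (F.map f)).map ((Over.post F).map h.f)) ≫
            ((omega F f β.A).hom ≫ (Over.post F).map β.a) =
          ((omega F f α.A).hom ≫ (Over.post F).map α.a) ≫ (Over.post F).map h.f
        replace hh : (Over.pullback f).map ((Over.map f).map h.f) ≫ β.a = α.a ≫ h.f := hh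
        rw [← Category.assoc, hn, Category.assoc]
        erw [← Functor.map_comp, hh, Functor.map_comp]
        rw [Category.assoc] }
  map_id α := by
    apply Monad.Algebra.Hom.ext
    show (Over.post F).map (𝟙 α.A) = 𝟙 ((Over.post F).obj α.A)
    rw [CategoryTheory.Functor.map_id]
  map_comp h₁ h₂ := by
    apply Monad.Algebra.Hom.ext
    show (Over.post F).map (h₁.f ≫ h₂.f) = (Over.post F).map h₁.f ≫ (Over.post F).map h₂.f
    rw [Functor.map_comp]

instance : (Gfun F f).Faithful where
  map_injective {α β} h₁ h₂ e := by
    apply Monad.Algebra.Hom.ext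
    apply (Over.post F).map_injective
    exact congrArg Monad.Algebra.Hom.f e

instance : (Gfun F f).Full where
  map_surjective {α β} g := by
    have hg := g.h
    replace hg : (Over.pullback (F.map f)).map ((Over.map (F.map f)).map g.f) ≫
        ((omega F f β.A).hom ≫ (Over.post F).map β.a) =
        ((omega F f α.A).hom ≫ (Over.post F).map α.a) ≫ g.f := hg
    refine ⟨⟨(Over.post F).preimage g.f, ?_⟩, ?_⟩
    · have hn := omega_natural F f ((Over.post F).preimage g.f)
      erw [(Over.post F).map_preimage] at hn
      have key : (Over.post F).map ((Over.pullback f).map ((Over.map f).map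
          ((Over.post F).preimage g.f))) =
          (omega F f α.A).inv ≫ ((Over.pullback (F.map f)).map ((Over.map (F.map f)).map g.f) ≫
            (omega F f β.A).hom) := by
        rw [Iso.eq_inv_comp]
        exact hn.symm
      show (Over.pullback f).map ((Over.map f).map ((Over.post F).preimage g.f)) ≫ β.a =
        α.a ≫ (Over.post F).preimage g.f
      apply (Over.post F).map_injective
      erw [Functor.map_comp, Functor.map_comp, (Over.post F).map_preimage, key]
      simp only [Category.assoc]
      rw [Iso.inv_comp_eq]
      exact (Category.assoc _ _ _).trans (hg.trans (Category.assoc _ _ _))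
    · apply Monad.Algebra.Hom.ext
      show (Over.post F).map ((Over.post F).preimage g.f) = g.f
      exact (Over.post F).map_preimage g.f

/-- The comparison square. -/
def kappa : Monad.comparison (Over.mapPullbackAdj f) ⋙ Gfun F f ≅
    Over.post F ⋙ Monad.comparison (Over.mapPullbackAdj (F.map f)) :=
  NatIso.ofComponents
    (fun x => Monad.Algebra.isoMk ((xiIso F f).app x) (by
      have h2 := mateEquiv_counit (Over.mapPullbackAdj f) (Over.mapPullbackAdj (F.map f))
        (theta F f).hom x
      have h2' : (Over.map (F.map f)).map ((xi F f).app x) ≫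
          (Over.mapPullbackAdj (F.map f)).counit.app ((Over.post F).obj x) =
          (theta F f).hom.app ((Over.pullback f).obj x) ≫
            (Over.post F).map ((Over.mapPullbackAdj f).counit.app x) := h2
      have h1 := (xi F f).naturality ((Over.mapPullbackAdj f).counit.app x)
      simp only [Functor.comp_map, Functor.comp_obj, Functor.id_obj, Functor.id_map] at h1
      simp only [Adjunction.toMonad_coe, Functor.comp_obj, Functor.comp_map, Gfun_obj_a,
        Gfun_obj_A, Monad.comparison_obj_A, Monad.comparison_obj_a, xiIso,
        Iso.app_hom, asIso_hom, omega, Iso.trans_hom, Functor.mapIso_hom, Iso.symm_hom,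
        NatIso.isIso_inv_app, asIso_inv, Category.assoc]
      show (Over.pullback (F.map f)).map ((Over.map (F.map f)).map ((xi F f).app x)) ≫
          (Over.pullback (F.map f)).map ((Over.mapPullbackAdj (F.map f)).counit.app
            ((Over.post F).obj x)) =
        (((Over.pullback (F.map f)).map ((theta F f).hom.app ((Over.pullback f).obj x)) ≫
          inv ((xi F f).app ((Over.map f).obj ((Over.pullback f).obj x)))) ≫
          (Over.post F).map ((Over.pullback f).map ((Over.mapPullbackAdj f).counit.app x))) ≫
          (xi F f).app x
      rw [Category.assoc, Category.assoc]
      rw [← (Over.pullback (F.map f)).map_comp, h2', (Over.pullback (F.map f)).map_comp,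
        h1, IsIso.inv_hom_id_assoc]))
    (fun {x y} u => by
      apply Monad.Algebra.Hom.ext
      have := (xi F f).naturality u
      simp only [Functor.comp_map] at this
      simp only [Functor.comp_obj, Functor.comp_map, Gfun_map_f, Monad.comparison_map_f,
        Monad.comparison_obj_A, Gfun_obj_A, xiIso, Iso.app_hom, asIso_hom]
      exact this)

/-- Transport of an algebra structure along an isomorphism. -/
def transportAlg {C : Type*} [Category C] {S : Monad C} (β : S.Algebra) {X : C}
    (j : β.A ≅ X) : S.Algebra where
  A := X
  a := (S : C ⥤ C).map j.inv ≫ β.a ≫ j.hom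
  unit := by
    have := S.η.naturality j.inv
    simp only [Functor.id_map] at this
    rw [← Category.assoc, ← Category.assoc, ← this]
    simp only [Category.assoc]
    rw [Monad.Algebra.unit_assoc, Iso.inv_hom_id]
    rfl
  assoc := by
    have hμ := S.μ.naturality j.inv
    simp only [Functor.comp_map] at hμ
    rw [← Category.assoc, ← Category.assoc, ← hμ]
    simp only [Category.assoc]
    rw [Monad.Algebra.assoc_assoc]
    simp only [Functor.map_comp, Category.assoc]
    rw [← Category.assoc (S.map j.hom), ← Functor.map_comp, Iso.hom_inv_id,
      CategoryTheory.Functor.map_id, Category.id_comp]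

/-- The transported algebra is isomorphic to the original. -/
def transportAlgIso {C : Type*} [Category C] {S : Monad C} (β : S.Algebra) {X : C}
    (j : β.A ≅ X) : transportAlg β j ≅ β :=
  Monad.Algebra.isoMk j.symm (by simp [transportAlg])


/-- Lift an algebra structure on the image of `a₀` to an algebra structure on `a₀`. -/
def liftAlg (a₀ : Over A)
    (σ : (Over.pullback (F.map f)).obj ((Over.map (F.map f)).obj ((Over.post F).obj a₀)) ⟶
      (Over.post F).obj a₀)
    (h1 : (Over.mapPullbackAdj (F.map f)).unit.app ((Over.post F).obj a₀) ≫ σ =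
      𝟙 ((Over.post F).obj a₀))
    (h2 : (Over.pullback (F.map f)).map ((Over.mapPullbackAdj (F.map f)).counit.app
        ((Over.map (F.map f)).obj ((Over.post F).obj a₀))) ≫ σ =
      (Over.pullback (F.map f)).map ((Over.map (F.map f)).map σ) ≫ σ) :
    (Over.mapPullbackAdj f).toMonad.Algebra where
  A := a₀
  a := (Over.post F).preimage ((omega F f a₀).inv ≫ σ)
  unit := by
    apply (Over.post F).map_injective
    simp only [Adjunction.toMonad_η, Functor.map_comp, Functor.map_preimage,
      CategoryTheory.Functor.map_id]
    erw [omega_unit F f a₀]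
    erw [Category.assoc, Iso.hom_inv_id_assoc, h1]
    exact ((Over.post F).map_id a₀).symm
  assoc := by
    apply (Over.post F).map_injective
    show (Over.post F).map ((Over.pullback f).map ((Over.mapPullbackAdj f).counit.app
        ((Over.map f).obj a₀)) ≫ (Over.post F).preimage ((omega F f a₀).inv ≫ σ)) =
      (Over.post F).map ((Over.pullback f).map ((Over.map f).map
        ((Over.post F).preimage ((omega F f a₀).inv ≫ σ))) ≫
        (Over.post F).preimage ((omega F f a₀).inv ≫ σ))
    simp only [Adjunction.toMonad_coe, Adjunction.toMonad_μ, Functor.comp_obj, Functor.comp_map,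
      Functor.whiskerRight_app, Functor.whiskerLeft_app, Functor.map_comp, Functor.map_preimage]
    rw [← cancel_epi ((omega F f ((Over.pullback f).obj ((Over.map f).obj a₀))).hom),
      ← cancel_epi ((Over.pullback (F.map f)).map ((Over.map (F.map f)).map (omega F f a₀).hom))]
    have hm := omega_mu F f a₀
    have hn := omega_natural F f (a := (Over.pullback f).obj ((Over.map f).obj a₀)) (b := a₀)
      ((Over.post F).preimage ((omega F f a₀).inv ≫ σ))
    rw [(Over.post F).map_preimage] at hn
    rw [← reassoc_of% hm, ← reassoc_of% hn]
    simp only [Category.assoc, Iso.hom_inv_id_assoc]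
    rw [h2]
    simp only [← Category.assoc]
    rw [← (Over.pullback (F.map f)).map_comp, ← (Over.map (F.map f)).map_comp,
      Iso.hom_inv_id_assoc]

lemma Gfun_liftAlg_a (a₀ : Over A) (σ h1 h2) :
    ((Gfun F f).obj (liftAlg F f a₀ σ h1 h2)).a = σ := by
  simp only [Gfun_obj_a, liftAlg, Functor.map_preimage, Iso.hom_inv_id_assoc]
  erw [Functor.map_preimage, Iso.hom_inv_id_assoc]

/-- The image under `Gfun` of a lifted algebra recovers the original algebra. -/
def liftAlgIso (a₀ : Over A) (β : (Over.mapPullbackAdj (F.map f)).toMonad.Algebra)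
    (j : β.A ≅ (Over.post F).obj a₀) :
    (Gfun F f).obj (liftAlg F f a₀ (transportAlg β j).a (transportAlg β j).unit
      (transportAlg β j).assoc) ≅ β :=
  Monad.Algebra.isoMk (B := transportAlg β j) (Iso.refl _)
    (by
      simp only [Iso.refl_hom, CategoryTheory.Functor.map_id, Category.id_comp, Category.comp_id]
      erw [CategoryTheory.Functor.map_id, Category.id_comp, Category.comp_id]
      exact (Gfun_liftAlg_a F f a₀ _ _ _).symm) ≪≫ transportAlgIso β j


end AuxDesc

/-- **Theorem (descent along fully faithful embeddings).**
Let `𝒜`, `𝒟` be categories with pullbacks and `F : 𝒜 ⥤ 𝒟` fully faithful and preserving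
pullbacks. If `F f` is an effective descent morphism in `𝒟`, then `f` is an effective descent
morphism in `𝒜` iff for every `g : E ⟶ F B` whose pullback along `F f` is isomorphic to some
`F C`, also `E` is isomorphic to some `F D`. -/
theorem statement0 {𝒜 : Type u₁} [Category.{v₁} 𝒜] {𝒟 : Type u₂} [Category.{v₂} 𝒟]
    [HasPullbacks 𝒜] [HasPullbacks 𝒟]
    (F : 𝒜 ⥤ 𝒟) [F.Full] [F.Faithful] [PreservesLimitsOfShape WalkingCospan F]
    {A B : 𝒜} (f : A ⟶ B)
    (hFf : IsEffectiveDescentMorphism (F.map f)) :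
    IsEffectiveDescentMorphism f ↔
      ∀ {E : 𝒟} (g : E ⟶ F.obj B),
        (∃ C : 𝒜, Nonempty (pullback (F.map f) g ≅ F.obj C)) →
        ∃ D : 𝒜, Nonempty (E ≅ F.obj D) := by
  haveI hD : (Monad.comparison (Over.mapPullbackAdj (F.map f))).IsEquivalence := hFf
  haveI hcf : (Monad.comparison (Over.mapPullbackAdj f) ⋙ Gfun F f).Faithful :=
    Functor.Faithful.of_iso (kappa F f).symm
  haveI hcfu : (Monad.comparison (Over.mapPullbackAdj f) ⋙ Gfun F f).Full :=
    Functor.Full.of_iso (kappa F f).symm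
  haveI hfaith : (Monad.comparison (Over.mapPullbackAdj f)).Faithful :=
    Functor.Faithful.of_comp (F := Monad.comparison (Over.mapPullbackAdj f)) (G := Gfun F f)
  haveI hfull : (Monad.comparison (Over.mapPullbackAdj f)).Full :=
    Functor.Full.of_comp_faithful (F := Monad.comparison (Over.mapPullbackAdj f))
      (G := Gfun F f)
  constructor
  · intro hf E g hg
    obtain ⟨C, ⟨hC⟩⟩ := hg
    haveI : (Monad.comparison (Over.mapPullbackAdj f)).IsEquivalence := hf
    let e : F.obj C ≅ ((Over.pullback (F.map f)).obj (Over.mk g)).left :=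
      hC.symm ≪≫ pullbackSymmetry (F.map f) g
    let a₀ : Over A :=
      Over.mk (F.preimage (e.hom ≫ ((Over.pullback (F.map f)).obj (Over.mk g)).hom))
    let j0 : (Over.post F).obj a₀ ≅ (Over.pullback (F.map f)).obj (Over.mk g) :=
      Over.isoMk e ((F.map_preimage _).symm)
    let β := (Monad.comparison (Over.mapPullbackAdj (F.map f))).obj (Over.mk g)
    let jj : β.A ≅ (Over.post F).obj a₀ := j0.symm
    let α := liftAlg F f a₀ (transportAlg β jj).a (transportAlg β jj).unit
      (transportAlg β jj).assoc
    let x := (Monad.comparison (Over.mapPullbackAdj f)).objPreimage α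
    have hx : (Monad.comparison (Over.mapPullbackAdj f)).obj x ≅ α :=
      Functor.objObjPreimageIso _ α
    have big : (Monad.comparison (Over.mapPullbackAdj (F.map f))).obj ((Over.post F).obj x) ≅
        (Monad.comparison (Over.mapPullbackAdj (F.map f))).obj (Over.mk g) :=
      ((kappa F f).app x).symm ≪≫ (Gfun F f).mapIso hx ≪≫ liftAlgIso F f a₀ β jj
    have yiso : (Over.post F).obj x ≅ Over.mk g :=
      (Monad.comparison (Over.mapPullbackAdj (F.map f))).preimageIso big
    exact ⟨x.left, ⟨((Over.forget _).mapIso yiso).symm⟩⟩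
  · intro hcond
    haveI hsurj : (Monad.comparison (Over.mapPullbackAdj f)).EssSurj := by
      constructor
      intro α
      let y := (Monad.comparison (Over.mapPullbackAdj (F.map f))).objPreimage ((Gfun F f).obj α)
      have u : (Monad.comparison (Over.mapPullbackAdj (F.map f))).obj y ≅ (Gfun F f).obj α :=
        Functor.objObjPreimageIso _ _
      have uL : pullback y.hom (F.map f) ≅ F.obj α.A.left :=
        (Over.forget _).mapIso (((Over.mapPullbackAdj (F.map f)).toMonad.forget).mapIso u)
      obtain ⟨D, ⟨k⟩⟩ := hcond y.hom ⟨α.A.left, ⟨pullbackSymmetry (F.map f) y.hom ≪≫ uL⟩⟩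
      refine ⟨Over.mk (F.preimage (k.inv ≫ y.hom)), ⟨?_⟩⟩
      have jy : y ≅ (Over.post F).obj (Over.mk (F.preimage (k.inv ≫ y.hom))) :=
        Over.isoMk k (by show k.hom ≫ F.map (F.preimage (k.inv ≫ y.hom)) = y.hom; simp)
      exact (Gfun F f).preimageIso ((kappa F f).app _ ≪≫
        (Monad.comparison (Over.mapPullbackAdj (F.map f))).mapIso jy.symm ≪≫ u)
    exact { faithful := hfaith, full := hfull, essSurj := hsurj }


end Desc
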